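/- For the Hilbert–Schmidt norm difference of the kernels: for any W ∈ (0,1/2) and integer N ≥ 1, ∫_{-W}^{W} ∫_{-W}^{W} ( sin(Nπ(x-y))/sin(π(x-y)) - sin(Nπ(x-y))/(π(x-y)) )² dx dy ≤ 4W² ( W² · 2π²/(3 sin(2πW)) )². -/

import Mathlib

open Real

lemma my_sin_ge_sub_cube (x : ℝ) (hx : 0 ≤ x) : x - x ^ 3 / 6 ≤ Real.sin x := by
  have hderiv : ∀ z : ℝ, HasDerivAt (fun z => Real.sin z - z + z ^ 3 / 6)
      (Real.cos z - 1 + z ^ 2 / 2) z := by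
    intro z
    have h1 := ((Real.hasDerivAt_sin z).sub (hasDerivAt_id z)).add
      ((hasDerivAt_pow 3 z).div_const 6)
    have h2 : Real.cos z - 1 + z ^ 2 / 2 = Real.cos z - 1 + ((3 : ℕ) : ℝ) * z ^ (3 - 1) / 6 := by
      norm_num
      ring
    rw [h2]
    exact h1
  have hmono : Monotone (fun z => Real.sin z - z + z ^ 3 / 6) := by
    apply monotone_of_deriv_nonneg
    · exact fun z => (hderiv z).differentiableAt
    · intro z
      rw [(hderiv z).deriv]
      nlinarith [Real.one_sub_sq_div_two_le_cos (x := z)]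
  have h0 := hmono hx
  simp only [Real.sin_zero] at h0
  norm_num at h0
  linarith

lemma my_scalar (s S : ℝ) (h0 : 0 < s) (hsS : s ≤ S) (hS : S < π) :
    1 / Real.sin s - 1 / s ≤ S ^ 2 / (6 * Real.sin S) := by
  have hsin_s : 0 < Real.sin s := Real.sin_pos_of_pos_of_lt_pi h0 (lt_of_le_of_lt hsS hS)
  have hsin_S : 0 < Real.sin S := Real.sin_pos_of_pos_of_lt_pi (h0.trans_le hsS) hS
  have hSpos : 0 < S := h0.trans_le hsS
  have hconc : s * Real.sin S ≤ S * Real.sin s := by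
    rcases eq_or_lt_of_le hsS with rfl | hlt
    · linarith
    · have hab : (1 - s / S) + s / S = 1 := by ring
      have hcc : ConcaveOn ℝ (Set.Icc 0 π) Real.sin := strictConcaveOn_sin_Icc.concaveOn
      have := hcc.2 (Set.mem_Icc.2 ⟨le_rfl, Real.pi_pos.le⟩) (Set.mem_Icc.2 ⟨hSpos.le, hS.le⟩)
        (show (0:ℝ) ≤ 1 - s / S by rw [sub_nonneg]; exact div_le_one_of_le₀ hsS hSpos.le)
        (show (0:ℝ) ≤ s / S by positivity) hab
      simp only [smul_eq_mul, mul_zero, Real.sin_zero, zero_add] at this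
      rw [div_mul_cancel₀ _ hSpos.ne'] at this
      calc s * Real.sin S = S * (s / S * Real.sin S) := by field_simp
        _ ≤ S * Real.sin s := by
            apply mul_le_mul_of_nonneg_left _ hSpos.le
            linarith
  have hcube := my_sin_ge_sub_cube s h0.le
  have step1 : 1 / Real.sin s - 1 / s ≤ s ^ 2 / (6 * Real.sin s) := by
    rw [div_sub_div _ _ hsin_s.ne' h0.ne', div_le_div_iff₀ (by positivity) (by positivity)]
    nlinarith
  have step2 : s ^ 2 / (6 * Real.sin s) ≤ S ^ 2 / (6 * Real.sin S) := by
    rw [div_le_div_iff₀ (by positivity) (by positivity)]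
    have h1 := mul_le_mul_of_nonneg_left hconc h0.le
    have h2 : s * (S * Real.sin s) ≤ S * (S * Real.sin s) :=
      mul_le_mul_of_nonneg_right hsS (by positivity)
    nlinarith [h1, h2]
  linarith

lemma my_Ebound (A s S : ℝ) (h0 : 0 < s) (hsS : s ≤ S) (hS : S < π) :
    |Real.sin A / Real.sin s - Real.sin A / s| ≤ S ^ 2 / (6 * Real.sin S) := by
  have hsin_s : 0 < Real.sin s := Real.sin_pos_of_pos_of_lt_pi h0 (lt_of_le_of_lt hsS hS)
  have hnn : 0 ≤ 1 / Real.sin s - 1 / s := by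
    have := Real.sin_le h0.le
    rw [sub_nonneg, div_le_div_iff₀ h0 hsin_s]
    linarith
  have heq : Real.sin A / Real.sin s - Real.sin A / s
      = Real.sin A * (1 / Real.sin s - 1 / s) := by ring
  rw [heq, abs_mul, abs_of_nonneg hnn]
  calc |Real.sin A| * (1 / Real.sin s - 1 / s) ≤ 1 * (1 / Real.sin s - 1 / s) :=
        mul_le_mul_of_nonneg_right (Real.abs_sin_le_one A) hnn
    _ = 1 / Real.sin s - 1 / s := one_mul _
    _ ≤ S ^ 2 / (6 * Real.sin S) := my_scalar s S h0 hsS hS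

lemma my_pointwise (W t : ℝ) (N : ℕ) (hW : 0 < W) (hW2 : W < 1 / 2) (ht : t ≠ 0)
    (htW : |t| ≤ 2 * W) :
    (Real.sin (N * π * t) / Real.sin (π * t) - Real.sin (N * π * t) / (π * t)) ^ 2 ≤
      (W ^ 2 * (2 * π ^ 2) / (3 * Real.sin (2 * π * W))) ^ 2 := by
  have hπ := Real.pi_pos
  have hS : (2 * π * W) < π := by nlinarith
  have hCeq : W ^ 2 * (2 * π ^ 2) / (3 * Real.sin (2 * π * W))
      = (2 * π * W) ^ 2 / (6 * Real.sin (2 * π * W)) := by ring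
  have habs : |Real.sin (N * π * t) / Real.sin (π * t) - Real.sin (N * π * t) / (π * t)|
      ≤ (2 * π * W) ^ 2 / (6 * Real.sin (2 * π * W)) := by
    rcases ht.lt_or_gt with hneg | hpos
    · have heq : Real.sin (↑N * π * t) / Real.sin (π * t) - Real.sin (↑N * π * t) / (π * t)
          = Real.sin (↑N * π * (-t)) / Real.sin (π * (-t)) - Real.sin (↑N * π * (-t)) / (π * (-t)) := by
        rw [mul_neg, mul_neg, Real.sin_neg, Real.sin_neg, neg_div_neg_eq, neg_div_neg_eq]
      rw [heq]
      apply my_Ebound _ _ _ (by nlinarith) _ hS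
      have h : -t ≤ 2 * W := by rw [abs_of_neg hneg] at htW; exact htW
      nlinarith [h]
    · apply my_Ebound _ _ _ (by nlinarith) _ hS
      have h : t ≤ 2 * W := by rw [abs_of_pos hpos] at htW; exact htW
      nlinarith [h]
  calc (Real.sin (N * π * t) / Real.sin (π * t) - Real.sin (N * π * t) / (π * t)) ^ 2
      = |Real.sin (N * π * t) / Real.sin (π * t) - Real.sin (N * π * t) / (π * t)| ^ 2 :=
        (sq_abs _).symm
    _ ≤ ((2 * π * W) ^ 2 / (6 * Real.sin (2 * π * W))) ^ 2 :=
        pow_le_pow_left₀ (abs_nonneg _) habs 2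
    _ = (W ^ 2 * (2 * π ^ 2) / (3 * Real.sin (2 * π * W))) ^ 2 := by rw [hCeq]

theorem stmt_17 (W : ℝ) (N : ℕ) (hW : W ∈ Set.Ioo 0 (1/2 : ℝ)) (hN : 1 ≤ N) :
    (∫ x in (-W)..W, ∫ y in (-W)..W,
        (if x = y then (0 : ℝ)
         else (Real.sin (N * π * (x - y)) / Real.sin (π * (x - y)) -
               Real.sin (N * π * (x - y)) / (π * (x - y))) ^ 2)) ≤
      4 * W ^ 2 * (W ^ 2 * (2 * π ^ 2) / (3 * Real.sin (2 * π * W))) ^ 2 := by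
  obtain ⟨hW0, hW2⟩ := hW
  set C2 : ℝ := (W ^ 2 * (2 * π ^ 2) / (3 * Real.sin (2 * π * W))) ^ 2 with hC2def
  have hC2 : 0 ≤ C2 := sq_nonneg _
  have hle : -W ≤ W := by linarith
  have hbound : ∀ x ∈ Set.uIoc (-W) W, ∀ y ∈ Set.uIoc (-W) W,
      (if x = y then (0 : ℝ)
       else (Real.sin (N * π * (x - y)) / Real.sin (π * (x - y)) -
             Real.sin (N * π * (x - y)) / (π * (x - y))) ^ 2) ≤ C2 := by
    intro x hx y hy
    rw [Set.uIoc_of_le hle] at hx hy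
    by_cases hxy : x = y
    · simp [hxy, hC2]
    · rw [if_neg hxy]
      apply my_pointwise W (x - y) N hW0 hW2 (sub_ne_zero.2 hxy)
      rw [abs_le]
      constructor <;> [linarith [hx.1, hy.2]; linarith [hx.2, hy.1]]
  have inner : ∀ x ∈ Set.uIoc (-W) W,
      ‖∫ y in (-W)..W,
        (if x = y then (0 : ℝ)
         else (Real.sin (N * π * (x - y)) / Real.sin (π * (x - y)) -
               Real.sin (N * π * (x - y)) / (π * (x - y))) ^ 2)‖ ≤ C2 * (2 * W) := by
    intro x hx
    have := intervalIntegral.norm_integral_le_of_norm_le_const (C := C2) (a := -W) (b := W)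
      (f := fun y => (if x = y then (0 : ℝ)
         else (Real.sin (N * π * (x - y)) / Real.sin (π * (x - y)) -
               Real.sin (N * π * (x - y)) / (π * (x - y))) ^ 2)) ?_
    · convert this using 2
      rw [abs_of_nonneg (by linarith)]
      ring
    · intro y hy
      rw [Real.norm_eq_abs, abs_of_nonneg (by positivity)]
      exact hbound x hx y hy
  have outer := intervalIntegral.norm_integral_le_of_norm_le_const (C := C2 * (2 * W))
    (a := -W) (b := W)
    (f := fun x => ∫ y in (-W)..W,
        (if x = y then (0 : ℝ)
         else (Real.sin (N * π * (x - y)) / Real.sin (π * (x - y)) -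
               Real.sin (N * π * (x - y)) / (π * (x - y))) ^ 2)) ?_
  · calc (∫ x in (-W)..W, ∫ y in (-W)..W,
        (if x = y then (0 : ℝ)
         else (Real.sin (N * π * (x - y)) / Real.sin (π * (x - y)) -
               Real.sin (N * π * (x - y)) / (π * (x - y))) ^ 2))
        ≤ ‖∫ x in (-W)..W, ∫ y in (-W)..W,
        (if x = y then (0 : ℝ)
         else (Real.sin (N * π * (x - y)) / Real.sin (π * (x - y)) -
               Real.sin (N * π * (x - y)) / (π * (x - y))) ^ 2)‖ := le_abs_self _
      _ ≤ C2 * (2 * W) * |W - -W| := outer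
      _ = 4 * W ^ 2 * C2 := by rw [abs_of_nonneg (by linarith)]; ring
      _ = 4 * W ^ 2 * (W ^ 2 * (2 * π ^ 2) / (3 * Real.sin (2 * π * W))) ^ 2 := by rw [hC2def]
  · intro x hx
    simpa using inner x hx
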